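/- Fix D ∈ {3,4,6}, nonnegative integers i ≤ n, and a prime p with p ≡ −1 (mod D), √(2Dn) < p ≤ n, p ≠ D−1, and p ∤ n+1. Let k be an integer with i ≤ k ≤ n and p ∣ Dk+1. If neither C(k+i,i+1) nor C(n−i,k−i) is divisible by p, then either {(n+1−1/D)/p} < 1/D or {(n+1/D)/p} ≥ 1 − 1/D. -/

import Mathlib

lemma carry_dvd_choose {p n k : ℕ} (hp : p.Prime) (hkn : k ≤ n)
    (h : p ≤ k % p + (n - k) % p) : p ∣ n.choose k := by
  apply dvd_of_emultiplicity_pos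
  rw [hp.emultiplicity_choose hkn (show Nat.log p n < Nat.log p n + 2 by omega)]
  have h1 : (1 : ℕ) ∈ Finset.filter (fun i => p ^ i ≤ k % p ^ i + (n - k) % p ^ i)
      (Finset.Ico 1 (Nat.log p n + 2)) := by
    simp only [Finset.mem_filter, Finset.mem_Ico, pow_one]
    exact ⟨⟨le_refl 1, by omega⟩, h⟩
  exact_mod_cast Nat.cast_pos.mpr (Finset.card_pos.mpr ⟨1, h1⟩)

theorem stmt13 (D i n k p : ℕ) (hD : D = 3 ∨ D = 4 ∨ D = 6) (hin : i ≤ n)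
    (hp : p.Prime) (hmod : (p : ZMod D) = -1)
    (hlow : Real.sqrt (2 * D * n) < p) (hup : p ≤ n)
    (hpD : p ≠ D - 1) (hpn : ¬ p ∣ n + 1)
    (hik : i ≤ k) (hkn : k ≤ n) (hdvd : p ∣ D * k + 1)
    (h1 : ¬ p ∣ (k + i).choose (i + 1)) (h2 : ¬ p ∣ (n - i).choose (k - i)) :
    Int.fract (((n : ℝ) + 1 - 1 / D) / p) < 1 / D ∨
      1 - 1 / D ≤ Int.fract (((n : ℝ) + 1 / D) / p) := by
  have hD3 : 3 ≤ D := by rcases hD with rfl | rfl | rfl <;> norm_num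
  have hp2 : 2 ≤ p := hp.two_le
  -- D ∣ p + 1
  have hDdvd : D ∣ p + 1 := by
    have h0 : ((p + 1 : ℕ) : ZMod D) = 0 := by push_cast; rw [hmod]; ring
    exact (ZMod.natCast_eq_zero_iff _ _).mp h0
  obtain ⟨s, hDs⟩ := hDdvd
  have hs1 : s ≠ 0 := by rintro rfl; omega
  have hs2 : 2 ≤ s := by
    by_contra h
    push_neg at h
    have hs : s = 1 := by omega
    subst hs
    exact hpD (by omega)
  have h3s : 3 * s ≤ D * s := Nat.mul_le_mul_right s hD3
  have h2D : D * 2 ≤ D * s := Nat.mul_le_mul_left D hs2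
  have hsplow : 2 * s ≤ p := by omega
  have hsp : s < p := by omega
  have hDp : D < p := by omega
  -- k % p = p - s
  have hkr : k % p = p - s := by
    haveI := Fact.mk hp
    have hDk : (D : ZMod p) * k = -1 := by
      have := (ZMod.natCast_eq_zero_iff (D * k + 1) p).mpr hdvd
      push_cast at this
      linear_combination this
    have hDr : (D : ZMod p) * ((p - s : ℕ) : ZMod p) = -1 := by
      have hcast : ((p - s : ℕ) : ZMod p) = -(s : ZMod p) := by
        have h0 : ((p - s : ℕ) : ZMod p) + (s : ZMod p) = 0 := by
          rw [← Nat.cast_add, Nat.sub_add_cancel hsp.le, ZMod.natCast_self]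
        linear_combination h0
      have hds : ((D * s : ℕ) : ZMod p) = ((p + 1 : ℕ) : ZMod p) := by rw [hDs]
      push_cast [ZMod.natCast_self] at hds
      rw [hcast]
      linear_combination -hds
    have hDne : (D : ZMod p) ≠ 0 := by
      rw [Ne, ZMod.natCast_eq_zero_iff]
      exact fun hdd => absurd (Nat.le_of_dvd (by omega) hdd) (by omega)
    have hk' : (k : ZMod p) = ((p - s : ℕ) : ZMod p) :=
      mul_left_cancel₀ hDne (hDk.trans hDr.symm)
    have := (ZMod.natCast_eq_natCast_iff' k (p - s) p).mp hk'
    rwa [Nat.mod_eq_of_lt (show p - s < p by omega)] at this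
  have hk1 : 1 ≤ k := by
    rcases Nat.eq_zero_or_pos k with rfl | h
    · rw [mul_zero, zero_add] at hdvd
      exact absurd (Nat.le_of_dvd one_pos hdvd) (by omega)
    · exact h
  -- helper for computing (a - b) % p
  have hsub : ∀ a b v : ℕ, b ≤ a → v < p → (v + b) % p = a % p → (a - b) % p = v := by
    intro a b v hba hv hvb
    have key : a - b ≡ v [MOD p] := by
      have h' : (a - b) + b ≡ v + b [MOD p] := by
        rw [Nat.sub_add_cancel hba]; exact hvb.symm
      exact Nat.ModEq.add_right_cancel' b h'
    rw [Nat.ModEq] at key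
    rwa [Nat.mod_eq_of_lt hv] at key
  set α := i % p with hα
  set ρ := n % p with hρ
  have hαp : α < p := Nat.mod_lt _ (by omega)
  have hρp : ρ < p := Nat.mod_lt _ (by omega)
  have hρp1 : ρ < p - 1 := by
    rcases Nat.lt_or_ge ρ (p - 1) with h | h
    · exact h
    · exfalso
      apply hpn
      have hn := Nat.div_add_mod n p
      exact ⟨n / p + 1, by rw [Nat.mul_add, Nat.mul_one]; omega⟩
  -- carry conditions from Kummer
  have c1 : (i + 1) % p + (k - 1) % p < p := by
    by_contra hc
    exact h1 (carry_dvd_choose hp (show i + 1 ≤ k + i by omega)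
      (by rw [show k + i - (i + 1) = k - 1 by omega]; omega))
  have c2 : (k - i) % p + (n - k) % p < p := by
    by_contra hc
    exact h2 (carry_dvd_choose hp (by omega)
      (by rw [show n - i - (k - i) = n - k by omega]; omega))
  have mk1 : (k - 1) % p = p - s - 1 := by
    apply hsub k 1 (p - s - 1) hk1 (by omega)
    rw [show p - s - 1 + 1 = p - s by omega, Nat.mod_eq_of_lt (show p - s < p by omega), hkr]
  have hi_mod : i ≡ α [MOD p] := (Nat.mod_modEq i p).symm
  have hk_mod : k ≡ p - s [MOD p] := by
    rw [Nat.ModEq, hkr, Nat.mod_eq_of_lt (show p - s < p by omega)]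
  -- real-number endgame
  have hp0 : (0 : ℝ) < p := by exact_mod_cast hp.pos
  have hD0 : (0 : ℝ) < D := by exact_mod_cast (show 0 < D by omega)
  have hD3R : (3 : ℝ) ≤ D := by exact_mod_cast hD3
  have hDsR : (D : ℝ) * s = (p : ℝ) + 1 := by exact_mod_cast hDs.symm
  have hρpR : (ρ : ℝ) + 1 ≤ p := by exact_mod_cast hρp
  have hinv : (1 / (D : ℝ)) * D = 1 := by field_simp
  have hD1 : (1 : ℝ) / D ≤ 1 := by rw [div_le_one hD0]; linarith
  have hD1' : (0 : ℝ) < 1 / D := by positivity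
  have hD1lt : (1 : ℝ) / D < 1 := by rw [div_lt_one hD0]; linarith
  have hnρ : (n : ℝ) = p * (n / p : ℕ) + ρ := by exact_mod_cast (Nat.div_add_mod n p).symm
  have final1 : ρ + 2 ≤ s → Int.fract (((n : ℝ) + 1 - 1 / D) / p) < 1 / D := by
    intro hρs
    have hρsR : (ρ : ℝ) + 2 ≤ s := by exact_mod_cast hρs
    have hfr : Int.fract (((n : ℝ) + 1 - 1 / D) / p) = ((ρ : ℝ) + 1 - 1 / D) / p := by
      have hx : ((n : ℝ) + 1 - 1 / D) / p = (n / p : ℕ) + ((ρ : ℝ) + 1 - 1 / D) / p := by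
        rw [hnρ]; field_simp; ring
      rw [hx, Int.fract_natCast_add]
      apply Int.fract_eq_self.mpr
      constructor
      · apply div_nonneg _ hp0.le
        have : (0 : ℝ) ≤ ρ := Nat.cast_nonneg ρ
        linarith
      · rw [div_lt_one hp0]; linarith
    rw [hfr, div_lt_div_iff₀ hp0 hD0]
    have hmul : (ρ : ℝ) * D ≤ ((s : ℝ) - 2) * D := by
      apply mul_le_mul_of_nonneg_right _ hD0.le
      linarith
    have hexp : ((ρ : ℝ) + 1 - 1 / D) * D = (ρ : ℝ) * D + D - 1 := by
      rw [sub_mul, add_mul, hinv, one_mul]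
    rw [hexp]
    linarith [hmul, hDsR, hD3R]
  have final2 : p - s ≤ ρ → 1 - 1 / D ≤ Int.fract (((n : ℝ) + 1 / D) / p) := by
    intro hρs
    have hρsR : (p : ℝ) - s ≤ ρ := by
      have h' : p ≤ ρ + s := by omega
      have := (Nat.cast_le (α := ℝ)).mpr h'
      push_cast at this
      linarith
    have hfr : Int.fract (((n : ℝ) + 1 / D) / p) = ((ρ : ℝ) + 1 / D) / p := by
      have hx : ((n : ℝ) + 1 / D) / p = (n / p : ℕ) + ((ρ : ℝ) + 1 / D) / p := by
        rw [hnρ]; field_simp; ring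
      rw [hx, Int.fract_natCast_add]
      apply Int.fract_eq_self.mpr
      constructor
      · positivity
      · rw [div_lt_one hp0]; linarith
    rw [hfr]
    have h1D : (1 : ℝ) - 1 / D = ((D : ℝ) - 1) / D := by field_simp
    rw [h1D, div_le_div_iff₀ hD0 hp0]
    have hmul : ((p : ℝ) - s) * D ≤ (ρ : ℝ) * D := mul_le_mul_of_nonneg_right hρsR hD0.le
    have hexp : ((ρ : ℝ) + 1 / D) * D = (ρ : ℝ) * D + 1 := by
      rw [add_mul, hinv]
    rw [hexp]
    linarith [hmul, hDsR]
  -- combinatorial core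
  by_cases hcase : α = p - 1
  · -- i ≡ -1 (mod p): show p - s ≤ ρ
    right
    apply final2
    have mki : (k - i) % p = p - s + 1 := by
      apply hsub k i (p - s + 1) hik (by omega)
      calc (p - s + 1 + i) % p = (p - s + 1 + α) % p := Nat.ModEq.add_left _ hi_mod
        _ = (p - s + p) % p := by rw [show p - s + 1 + α = p - s + p by omega]
        _ = (p - s) % p := Nat.add_mod_right _ _
        _ = k % p := by rw [Nat.mod_eq_of_lt (show p - s < p by omega), hkr]
    by_contra hρs
    push_neg at hρs
    have mnk : (n - k) % p = ρ + s := by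
      apply hsub n k (ρ + s) hkn (by omega)
      calc (ρ + s + k) % p = (ρ + s + (p - s)) % p := Nat.ModEq.add_left _ hk_mod
        _ = (ρ + p) % p := by rw [show ρ + s + (p - s) = ρ + p by omega]
        _ = ρ % p := Nat.add_mod_right _ _
        _ = n % p := by rw [Nat.mod_eq_of_lt hρp]
    omega
  · -- α ≤ p - 2
    have hα2 : α ≤ p - 2 := by omega
    have mi1 : (i + 1) % p = α + 1 := by
      have : i + 1 ≡ α + 1 [MOD p] := hi_mod.add_right 1
      rw [Nat.ModEq] at this
      rwa [Nat.mod_eq_of_lt (show α + 1 < p by omega)] at this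
    have hαs : α + 1 ≤ s := by omega
    have mki : (k - i) % p = p - s - α := by
      apply hsub k i (p - s - α) hik (by omega)
      calc (p - s - α + i) % p = (p - s - α + α) % p := Nat.ModEq.add_left _ hi_mod
        _ = (p - s) % p := by rw [show p - s - α + α = p - s by omega]
        _ = k % p := by rw [Nat.mod_eq_of_lt (show p - s < p by omega), hkr]
    rcases Nat.lt_or_ge ρ (p - s) with hρs | hρs
    · left
      apply final1
      have mnk : (n - k) % p = ρ + s := by
        apply hsub n k (ρ + s) hkn (by omega)
        calc (ρ + s + k) % p = (ρ + s + (p - s)) % p := Nat.ModEq.add_left _ hk_mod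
          _ = (ρ + p) % p := by rw [show ρ + s + (p - s) = ρ + p by omega]
          _ = ρ % p := Nat.add_mod_right _ _
          _ = n % p := by rw [Nat.mod_eq_of_lt hρp]
      omega
    · exact Or.inr (final2 hρs)
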